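/- For every g ∈ SL(2, ℂ), the map on ℂP¹ sending zℂ to gzℂ is bi-Lipschitz with bi-Lipschitz constant ‖g‖_op², i.e. for all zℂ, wℂ ∈ ℂP¹ one has ‖g‖_op⁻² · d(zℂ, wℂ) ≤ d(gzℂ, gwℂ) ≤ ‖g‖_op² · d(zℂ, wℂ). -/

import Mathlib

noncomputable section
open scoped Matrix

/-- `ℂ²` with the standard Hermitian norm. -/
abbrev C2 := EuclideanSpace ℂ (Fin 2)

/-- The distance between the lines spanned by `z` and `w`, computed on representatives:
`d(zℂ, wℂ) = |z₁w₂ - z₂w₁| / (‖z‖‖w‖)`. -/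
def dCP (z w : C2) : ℝ := ‖z 0 * w 1 - z 1 * w 0‖ / (‖z‖ * ‖w‖)

/-- First standard basis vector of `ℂ²`. -/
def e1 : C2 := !₂[1, 0]

/-- Second standard basis vector of `ℂ²`. -/
def e2 : C2 := !₂[0, 1]

/-- The operator norm of a `2×2` complex matrix acting on `ℂ²` with the Hermitian norm. -/
def opn (A : Matrix (Fin 2) (Fin 2) ℂ) : ℝ := ‖Matrix.toEuclideanCLM (𝕜 := ℂ) A‖

/-- The action of a matrix on a vector of `ℂ²`. -/
def mulVecE (A : Matrix (Fin 2) (Fin 2) ℂ) (z : C2) : C2 := Matrix.toEuclideanCLM (𝕜 := ℂ) A z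

lemma mulVecE_apply (A : Matrix (Fin 2) (Fin 2) ℂ) (z : C2) (i : Fin 2) :
    mulVecE A z i = A i 0 * z 0 + A i 1 * z 1 := by
  show (A *ᵥ (WithLp.ofLp z)) i = _
  simp [Matrix.mulVec, dotProduct, Fin.sum_univ_two]

lemma norm_mulVecE_le (A : Matrix (Fin 2) (Fin 2) ℂ) (z : C2) :
    ‖mulVecE A z‖ ≤ opn A * ‖z‖ :=
  (Matrix.toEuclideanCLM (𝕜 := ℂ) A).le_opNorm z

open scoped Matrix.Norms.L2Operator in
lemma opn_conjTranspose (A : Matrix (Fin 2) (Fin 2) ℂ) : opn Aᴴ = opn A := by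
  unfold opn
  rw [← Matrix.cstar_norm_def, ← Matrix.cstar_norm_def, Matrix.l2_opNorm_conjTranspose]

/-- Antilinear "symplectic conjugation". -/
def Kc (u : C2) : C2 := !₂[(starRingEnd ℂ) (u 1), -(starRingEnd ℂ) (u 0)]

lemma Kc_zero (u : C2) : Kc u 0 = (starRingEnd ℂ) (u 1) := rfl
lemma Kc_one (u : C2) : Kc u 1 = -(starRingEnd ℂ) (u 0) := rfl

lemma norm_Kc (u : C2) : ‖Kc u‖ = ‖u‖ := by
  rw [EuclideanSpace.norm_eq, EuclideanSpace.norm_eq]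
  simp [Fin.sum_univ_two, Kc_zero, Kc_one, add_comm]

lemma adjugate_eq_Kc (A : Matrix (Fin 2) (Fin 2) ℂ) (u : C2) :
    mulVecE (Matrix.adjugate A) u = -Kc (mulVecE Aᴴ (Kc u)) := by
  have h0 : mulVecE (Matrix.adjugate A) u 0 = -(Kc (mulVecE Aᴴ (Kc u)) 0) := by
    simp [Matrix.adjugate_fin_two, Kc_zero, Kc_one, mulVecE_apply, Complex.star_def]
    try ring
  have h1 : mulVecE (Matrix.adjugate A) u 1 = -(Kc (mulVecE Aᴴ (Kc u)) 1) := by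
    simp [Matrix.adjugate_fin_two, Kc_zero, Kc_one, mulVecE_apply, Complex.star_def]
    try ring
  ext i
  fin_cases i
  · exact h0
  · exact h1

lemma norm_le_opn_mul (g : Matrix.SpecialLinearGroup (Fin 2) ℂ) (z : C2) :
    ‖z‖ ≤ opn (↑g) * ‖mulVecE (↑g) z‖ := by
  have hz : z = mulVecE (Matrix.adjugate (↑g)) (mulVecE (↑g) z) := by
    unfold mulVecE
    rw [← ContinuousLinearMap.comp_apply, ← ContinuousLinearMap.mul_def, ← map_mul,
      Matrix.adjugate_mul, g.2, one_smul, map_one]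
    rfl
  calc ‖z‖ = ‖mulVecE (Matrix.adjugate (↑g)) (mulVecE (↑g) z)‖ := by rw [← hz]
    _ = ‖Kc (mulVecE ((↑g : Matrix (Fin 2) (Fin 2) ℂ)ᴴ) (Kc (mulVecE (↑g) z)))‖ := by rw [adjugate_eq_Kc, norm_neg]
    _ = ‖mulVecE ((↑g : Matrix (Fin 2) (Fin 2) ℂ)ᴴ) (Kc (mulVecE (↑g) z))‖ := norm_Kc _
    _ ≤ opn ((↑g : Matrix (Fin 2) (Fin 2) ℂ)ᴴ) * ‖Kc (mulVecE (↑g) z)‖ := norm_mulVecE_le _ _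
    _ = opn (↑g) * ‖mulVecE (↑g) z‖ := by rw [opn_conjTranspose, norm_Kc]

lemma num_invariant (A : Matrix (Fin 2) (Fin 2) ℂ) (z w : C2) :
    mulVecE A z 0 * mulVecE A w 1 - mulVecE A z 1 * mulVecE A w 0 =
      A.det * (z 0 * w 1 - z 1 * w 0) := by
  simp only [mulVecE_apply, Matrix.det_fin_two]
  ring

lemma aux_ineq (a N P Q R S : ℝ) (hN : 0 ≤ N) (hP : 0 < P) (hQ : 0 < Q) (hR : 0 < R)
    (hS : 0 < S) (h1 : R ≤ a * P) (h2 : S ≤ a * Q) (h3 : P ≤ a * R) (h4 : Q ≤ a * S) :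
    (a ^ 2)⁻¹ * (N / (P * Q)) ≤ N / (R * S) ∧ N / (R * S) ≤ a ^ 2 * (N / (P * Q)) := by
  have ha : 0 < a := by nlinarith
  constructor
  · have e : (a ^ 2)⁻¹ * (N / (P * Q)) = N / (a ^ 2 * (P * Q)) := by
      field_simp
    rw [e, div_le_div_iff₀ (by positivity) (by positivity)]
    have key : R * S ≤ a ^ 2 * (P * Q) := by nlinarith
    nlinarith [mul_le_mul_of_nonneg_left key hN]
  · rw [mul_div_assoc' (a^2) N (P*Q), div_le_div_iff₀ (by positivity) (by positivity)]
    have key : P * Q ≤ a ^ 2 * (R * S) := by nlinarith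
    nlinarith [mul_le_mul_of_nonneg_left key hN]

/-- For g ∈ SL(2,ℂ), the induced map on ℂP¹ is bi-Lipschitz with constant ‖g‖_op². -/
theorem stmt_1 (g : Matrix.SpecialLinearGroup (Fin 2) ℂ) (z w : C2)
    (hz : z ≠ 0) (hw : w ≠ 0) :
    ((opn (↑g)) ^ 2)⁻¹ * dCP z w ≤ dCP (mulVecE (↑g) z) (mulVecE (↑g) w) ∧
    dCP (mulVecE (↑g) z) (mulVecE (↑g) w) ≤ (opn (↑g)) ^ 2 * dCP z w := by
  have hzP : (0:ℝ) < ‖z‖ := norm_pos_iff.2 hz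
  have hwP : (0:ℝ) < ‖w‖ := norm_pos_iff.2 hw
  have hop : 0 ≤ opn (↑g : Matrix (Fin 2) (Fin 2) ℂ) := norm_nonneg _
  have h3 := norm_le_opn_mul g z
  have h4 := norm_le_opn_mul g w
  have hRz : (0:ℝ) < ‖mulVecE (↑g) z‖ := by nlinarith [norm_nonneg (mulVecE (↑g) z), hop]
  have hRw : (0:ℝ) < ‖mulVecE (↑g) w‖ := by nlinarith [norm_nonneg (mulVecE (↑g) w), hop]
  have hnum : ‖mulVecE (↑g) z 0 * mulVecE (↑g) w 1
      - mulVecE (↑g) z 1 * mulVecE (↑g) w 0‖ = ‖z 0 * w 1 - z 1 * w 0‖ := by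
    rw [num_invariant, g.2, one_mul]
  unfold dCP
  rw [hnum]
  exact aux_ineq (opn ↑g) _ _ _ _ _ (by positivity) hzP hwP hRz hRw
    (norm_mulVecE_le _ _) (norm_mulVecE_le _ _) h3 h4
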